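/- If the covariance P of a mean-zero Gaussian e ∈ ℝⁿ satisfies P ≥ (W⁻¹+R⁻¹)⁻¹ with W, R positive definite, then det P ≥ 1/det(R⁻¹+W⁻¹), and hence P(‖e‖ ≤ ε) ≤ min{ εⁿ √(det(R⁻¹+W⁻¹)) / (2^{n/2} Γ(n/2+1)), 1 }. -/

import Mathlib

open MeasureTheory Matrix Real

lemma aux_eig_ge_one {n : ℕ} {D : Matrix (Fin n) (Fin n) ℝ} (hD : D.IsHermitian)
    (h : (D - 1).PosSemidef) (i : Fin n) : 1 ≤ hD.eigenvalues i := by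
  set v : Fin n → ℝ := ⇑(hD.eigenvectorBasis i) with hv
  have hnorm : ‖hD.eigenvectorBasis i‖ = 1 := hD.eigenvectorBasis.orthonormal.1 i
  have hvv : dotProduct v v = 1 := by
    have := congrArg (· ^ 2) hnorm
    rw [EuclideanSpace.norm_eq] at this
    simp only [one_pow] at this
    rw [Real.sq_sqrt (by positivity)] at this
    simpa [dotProduct, sq] using this
  have h2 := h.dotProduct_mulVec_nonneg v
  have heq := hD.eigenvalues_eq i
  have hDv : D *ᵥ v = (D - 1) *ᵥ v + v := by
    rw [Matrix.sub_mulVec, Matrix.one_mulVec]; abel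
  rw [hDv] at heq
  simp only [dotProduct_add, star_trivial] at heq h2 ⊢
  rw [heq]
  simp only [RCLike.re_to_real]
  rw [← hv, hvv] at *
  linarith

lemma aux_det_one_add {n : ℕ} {C : Matrix (Fin n) (Fin n) ℝ} (hC : C.PosSemidef) :
    1 ≤ (1 + C).det := by
  have hD : (1 + C).IsHermitian := Matrix.isHermitian_one.add hC.1
  have h1 : ((1 + C) - 1).PosSemidef := by simpa using hC
  rw [hD.det_eq_prod_eigenvalues]
  calc (1:ℝ) = ∏ _i : Fin n, 1 := by simp
    _ ≤ ∏ i, hD.eigenvalues i :=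
        Finset.prod_le_prod (fun i _ => zero_le_one) (fun i _ => aux_eig_ge_one hD h1 i)

open scoped MatrixOrder in
lemma aux_det_mono {n : ℕ} {K Q : Matrix (Fin n) (Fin n) ℝ} (hK : K.PosDef)
    (h : (Q - K).PosSemidef) : K.det ≤ Q.det := by
  set M := CFC.sqrt K with hMdef
  have hMM : M * M = K := CFC.sqrt_mul_sqrt_self K hK.posSemidef.nonneg
  have hMh : M.IsHermitian := (CFC.sqrt_nonneg K).posSemidef.1
  have hdetM : M.det * M.det = K.det := by rw [← Matrix.det_mul, hMM]
  have hKd : 0 < K.det := hK.det_pos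
  have hMd : M.det ≠ 0 := by
    intro h0; rw [h0, zero_mul] at hdetM; exact hKd.ne' hdetM.symm
  have hMu : IsUnit M.det := isUnit_iff_ne_zero.2 hMd
  set C := M⁻¹ * (Q - K) * M⁻¹ with hCdef
  have hC : C.PosSemidef := by
    have := h.conjTranspose_mul_mul_same (B := M⁻¹)
    rwa [Matrix.conjTranspose_nonsing_inv, hMh.eq] at this
  have h1 : M * (M⁻¹ * (Q - K) * M⁻¹) * M = Q - K := by
    rw [← mul_assoc, ← mul_assoc, Matrix.mul_nonsing_inv M hMu, one_mul, mul_assoc,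
      Matrix.nonsing_inv_mul M hMu, mul_one]
  have hQ : Q = M * (1 + C) * M := by
    rw [hCdef, mul_add, mul_one, add_mul, hMM, h1]
    abel
  calc K.det = K.det * 1 := (mul_one _).symm
    _ ≤ K.det * (1 + C).det := by
        exact mul_le_mul_of_nonneg_left (aux_det_one_add hC) hKd.le
    _ = Q.det := by rw [hQ, Matrix.det_mul, Matrix.det_mul, mul_comm M.det, mul_assoc, ← hdetM]; ring

lemma aux_total {n : ℕ} {P : Matrix (Fin n) (Fin n) ℝ} (hP : P.PosDef) :
    ∫⁻ z : EuclideanSpace ℝ (Fin n),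
      ENNReal.ofReal ((Real.sqrt ((2 * π) ^ n * P.det))⁻¹ *
        Real.exp (-(∑ i, ∑ j, z i * P⁻¹ i j * z j) / 2)) = 1 := by
  have hA : (P⁻¹).PosDef := hP.inv
  set A := P⁻¹ with hAdef
  set lam := hA.1.eigenvalues with hlamdef
  have hlam : ∀ i, 0 < lam i := fun i => hA.eigenvalues_pos i
  have hPd : 0 < P.det := hP.det_pos
  set c : ℝ := (Real.sqrt ((2 * π) ^ n * P.det))⁻¹ with hcdef
  have hsq : 0 < Real.sqrt ((2 * π) ^ n * P.det) :=
    Real.sqrt_pos.mpr (by positivity)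
  have hcpos : 0 < c := by rw [hcdef]; exact inv_pos.mpr hsq
  -- the unitary
  set U : Matrix (Fin n) (Fin n) ℝ := (hA.1.eigenvectorUnitary : Matrix (Fin n) (Fin n) ℝ)
    with hUdef
  have hU1 : star U * U = 1 := Matrix.mem_unitaryGroup_iff'.mp hA.1.eigenvectorUnitary.2
  have hstarU : star U = Uᵀ := by
    rw [Matrix.star_eq_conjTranspose, Matrix.conjTranspose_eq_transpose_of_trivial]
  have hdet2 : U.det * U.det = 1 := by
    have h := congrArg Matrix.det hU1
    rwa [Matrix.det_mul, Matrix.det_one, hstarU, Matrix.det_transpose] at h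
  have hdetU : |U.det| = 1 := by
    rcases mul_self_eq_one_iff.mp hdet2 with h | h <;> rw [h] <;> norm_num
  have hdet0 : U.det ≠ 0 := fun h => by simp [h] at hdetU
  -- spectral theorem
  have hspec : star U * A * U = Matrix.diagonal lam := by
    have h := hA.1.spectral_theorem
    rw [RCLike.ofReal_real_eq_id, Function.id_comp] at h
    rw [Unitary.conjStarAlgAut_apply] at h
    rw [← hlamdef, ← hUdef] at h
    rw [h, ← Matrix.mul_assoc, ← Matrix.mul_assoc, hU1, Matrix.one_mul,
      Matrix.mul_assoc, hU1, Matrix.mul_one]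
  -- quadratic form
  have hquad : ∀ z : Fin n → ℝ, ∑ i, ∑ j, z i * A i j * z j = z ⬝ᵥ (A *ᵥ z) := by
    intro z
    simp only [dotProduct, Matrix.mulVec, Finset.mul_sum]
    exact Finset.sum_congr rfl fun i _ => Finset.sum_congr rfl fun j _ => by ring
  have hform : ∀ x : Fin n → ℝ,
      (Matrix.toLin' U x) ⬝ᵥ (A *ᵥ (Matrix.toLin' U x)) = ∑ i, lam i * x i ^ 2 := by
    intro x
    rw [Matrix.toLin'_apply, Matrix.mulVec_mulVec]
    rw [show U *ᵥ x = x ᵥ* Uᵀ from (Matrix.vecMul_transpose U x).symm]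
    rw [Matrix.dotProduct_mulVec, Matrix.vecMul_vecMul, ← hstarU, ← Matrix.mul_assoc, hspec]
    simp only [Matrix.vecMul_diagonal, dotProduct]
    exact Finset.sum_congr rfl fun i _ => by ring
  -- measurability on pi space
  have hmeaspi : Measurable fun x : Fin n → ℝ =>
      ENNReal.ofReal (c * Real.exp (-(∑ i, ∑ j, x i * A i j * x j) / 2)) := by
    apply Measurable.ennreal_ofReal
    fun_prop
  -- measure preserving orthogonal map
  have hmp : MeasurePreserving (Matrix.toLin' U) (volume : Measure (Fin n → ℝ)) volume := by
    refine ⟨(Matrix.toLin' U).continuous_of_finiteDimensional.measurable, ?_⟩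
    rw [Real.map_matrix_volume_pi_eq_smul_volume_pi hdet0]
    simp [abs_inv, hdetU]
  -- integrability of the product gaussian
  have hInt : Integrable (fun x : Fin n → ℝ => c * ∏ i, Real.exp (-(lam i / 2) * x i ^ 2)) := by
    apply Integrable.const_mul
    exact Integrable.fintype_prod (f := fun i (t : ℝ) => Real.exp (-(lam i / 2) * t ^ 2))
      fun i => integrable_exp_neg_mul_sq (half_pos (hlam i))
  have hpt : ∀ x : Fin n → ℝ, c * Real.exp (-(∑ i, lam i * x i ^ 2) / 2) =
      c * ∏ i, Real.exp (-(lam i / 2) * x i ^ 2) := by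
    intro x
    rw [← Real.exp_sum]
    congr 1
    rw [neg_div, Finset.sum_div, ← Finset.sum_neg_distrib]
    congr 1
    exact Finset.sum_congr rfl fun i _ => by ring
  calc ∫⁻ z : EuclideanSpace ℝ (Fin n),
        ENNReal.ofReal (c * Real.exp (-(∑ i, ∑ j, z i * A i j * z j) / 2))
      = ∫⁻ x : Fin n → ℝ,
          ENNReal.ofReal (c * Real.exp (-(∑ i, ∑ j, x i * A i j * x j) / 2)) := by
        rw [← ((EuclideanSpace.volume_preserving_symm_measurableEquiv_toLp (Fin n)).symm _).lintegral_comp_emb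
          (MeasurableEquiv.measurableEmbedding _)]
        rfl
    _ = ∫⁻ x : Fin n → ℝ, ENNReal.ofReal (c * Real.exp (-(∑ i, lam i * x i ^ 2) / 2)) := by
        rw [← hmp.lintegral_comp hmeaspi]
        refine lintegral_congr fun x => ?_
        rw [hquad, hform]
    _ = ∫⁻ x : Fin n → ℝ,
          ENNReal.ofReal (c * ∏ i, Real.exp (-(lam i / 2) * x i ^ 2)) := by
        exact lintegral_congr fun x => by rw [hpt]
    _ = ENNReal.ofReal (∫ x : Fin n → ℝ, c * ∏ i, Real.exp (-(lam i / 2) * x i ^ 2)) := by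
        rw [← ofReal_integral_eq_lintegral_ofReal hInt]
        exact Filter.Eventually.of_forall fun x => by positivity
    _ = 1 := by
        rw [MeasureTheory.integral_const_mul,
          MeasureTheory.integral_fintype_prod_volume_eq_prod
            (f := fun i (t : ℝ) => Real.exp (-(lam i / 2) * t ^ 2))]
        have hg : ∀ i, ∫ t : ℝ, Real.exp (-(lam i / 2) * t ^ 2) = Real.sqrt (2 * π / lam i) := by
          intro i
          rw [integral_gaussian]
          congr 1
          field_simp
        simp_rw [hg]
        have hprod : ∏ i, Real.sqrt (2 * π / lam i) = Real.sqrt (∏ i, 2 * π / lam i) := by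
          simp_rw [Real.sqrt_eq_rpow]
          rw [← Real.finset_prod_rpow _ _ (fun i _ => by have := hlam i; positivity)]
        rw [hprod]
        have hpl : ∏ i, 2 * π / lam i = (2 * π) ^ n * P.det := by
          rw [Finset.prod_div_distrib, Finset.prod_const, Finset.card_univ, Fintype.card_fin]
          have hdA : ∏ i, lam i = A.det := by
            rw [hA.1.det_eq_prod_eigenvalues]; rfl
          rw [hdA, hAdef, Matrix.det_nonsing_inv, Ring.inverse_eq_inv', div_eq_mul_inv, inv_inv]
        rw [hpl, hcdef, inv_mul_cancel₀ hsq.ne']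
        rw [ENNReal.ofReal_one]



/-- If the covariance `P` of a mean-zero Gaussian `e ∈ ℝⁿ` (modeled by its density `f`)
satisfies `P ≥ (W⁻¹+R⁻¹)⁻¹` with `W`, `R` positive definite, then
`det P ≥ 1/det(R⁻¹+W⁻¹)`, and hence
`P(‖e‖ ≤ ε) ≤ min{ εⁿ √(det(R⁻¹+W⁻¹)) / (2^{n/2} Γ(n/2+1)), 1 }`. -/
theorem stmt8 {n : ℕ} (W R P : Matrix (Fin n) (Fin n) ℝ)
    (hW : W.PosDef) (hR : R.PosDef) (hP : P.PosDef)
    (hle : (P - (W⁻¹ + R⁻¹)⁻¹).PosSemidef)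
    (ε : ℝ) (hε : 0 < ε)
    (f : EuclideanSpace ℝ (Fin n) → ℝ)
    (hf : ∀ z, f z = (Real.sqrt ((2 * Real.pi) ^ n * P.det))⁻¹ *
      Real.exp (-(∑ i, ∑ j, z i * P⁻¹ i j * z j) / 2))
    (μ : Measure (EuclideanSpace ℝ (Fin n)))
    (hμ : μ = volume.withDensity (fun z => ENNReal.ofReal (f z))) :
    1 / (R⁻¹ + W⁻¹).det ≤ P.det ∧
      (μ (Metric.closedBall 0 ε)).toReal ≤
        min (ε ^ n * Real.sqrt ((R⁻¹ + W⁻¹).det) /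
          (2 ^ ((n : ℝ) / 2) * Real.Gamma ((n : ℝ) / 2 + 1))) 1 := by
  have hWi : (W⁻¹).PosDef := hW.inv
  have hRi : (R⁻¹).PosDef := hR.inv
  have hsum : (W⁻¹ + R⁻¹).PosDef := hWi.add hRi
  have hK : ((W⁻¹ + R⁻¹)⁻¹).PosDef := hsum.inv
  have hdS : 0 < (R⁻¹ + W⁻¹).det := by rw [add_comm]; exact hsum.det_pos
  have hdetK : ((W⁻¹ + R⁻¹)⁻¹).det = 1 / (R⁻¹ + W⁻¹).det := by
    rw [Matrix.det_nonsing_inv, Ring.inverse_eq_inv', one_div, add_comm]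
  have part1 : 1 / (R⁻¹ + W⁻¹).det ≤ P.det := by
    rw [← hdetK]; exact aux_det_mono hK hle
  refine ⟨part1, ?_⟩
  have hPd : 0 < P.det := hP.det_pos
  set c : ℝ := (Real.sqrt ((2 * π) ^ n * P.det))⁻¹ with hcdef
  have hsqpos : 0 < Real.sqrt ((2 * π) ^ n * P.det) := Real.sqrt_pos.mpr (by positivity)
  have hcpos : 0 < c := inv_pos.mpr hsqpos
  have hΓ : 0 < Real.Gamma ((n : ℝ) / 2 + 1) := Real.Gamma_pos_of_pos (by positivity)
  have hfle : ∀ z, f z ≤ c := by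
    intro z
    rw [hf]
    have hq : 0 ≤ ∑ i, ∑ j, z i * P⁻¹ i j * z j := by
      have h0 := hP.inv.posSemidef.dotProduct_mulVec_nonneg (fun i => z i)
      simp only [star_trivial] at h0
      refine h0.trans_eq (Eq.symm ?_)
      simp only [dotProduct, Matrix.mulVec, Finset.mul_sum]
      exact Finset.sum_congr rfl fun i _ => Finset.sum_congr rfl fun j _ => by ring
    calc c * Real.exp (-(∑ i, ∑ j, z i * P⁻¹ i j * z j) / 2) ≤ c * 1 := by
          refine mul_le_mul_of_nonneg_left ?_ hcpos.le
          exact Real.exp_le_one_iff.mpr (by linarith)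
      _ = c := mul_one c
  have hball : MeasurableSet (Metric.closedBall (0 : EuclideanSpace ℝ (Fin n)) ε) :=
    measurableSet_closedBall
  have hμball : μ (Metric.closedBall 0 ε)
      = ∫⁻ z in Metric.closedBall 0 ε, ENNReal.ofReal (f z) := by
    rw [hμ, withDensity_apply _ hball]
  have htotal : μ Set.univ = 1 := by
    rw [hμ, withDensity_apply _ MeasurableSet.univ, Measure.restrict_univ]
    rw [← aux_total hP]
    exact lintegral_congr fun z => by rw [hf]
  have hle1 : μ (Metric.closedBall 0 ε) ≤ 1 :=
    htotal ▸ measure_mono (Set.subset_univ _)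
  have hbound : μ (Metric.closedBall 0 ε) ≤
      ENNReal.ofReal c * volume (Metric.closedBall (0 : EuclideanSpace ℝ (Fin n)) ε) := by
    rw [hμball]
    calc ∫⁻ z in Metric.closedBall 0 ε, ENNReal.ofReal (f z)
        ≤ ∫⁻ _z in Metric.closedBall (0 : EuclideanSpace ℝ (Fin n)) ε, ENNReal.ofReal c :=
          lintegral_mono fun z => ENNReal.ofReal_le_ofReal (hfle z)
      _ = ENNReal.ofReal c * volume (Metric.closedBall (0 : EuclideanSpace ℝ (Fin n)) ε) := by
          rw [setLIntegral_const]
  have hto1 : (μ (Metric.closedBall 0 ε)).toReal ≤ 1 := by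
    calc (μ (Metric.closedBall 0 ε)).toReal ≤ (1 : ENNReal).toReal :=
        ENNReal.toReal_mono ENNReal.one_ne_top hle1
      _ = 1 := by simp
  rcases Nat.eq_zero_or_pos n with hn | hn
  · subst hn
    simpa [Matrix.det_fin_zero, Real.Gamma_one] using hto1
  haveI : Nonempty (Fin n) := ⟨⟨0, hn⟩⟩
  have hvol : volume (Metric.closedBall (0 : EuclideanSpace ℝ (Fin n)) ε)
      = ENNReal.ofReal (ε ^ n * (Real.sqrt π ^ n / Real.Gamma ((n : ℝ) / 2 + 1))) := by
    rw [EuclideanSpace.volume_closedBall, Fintype.card_fin]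
    rw [← ENNReal.ofReal_pow hε.le, ← ENNReal.ofReal_mul (by positivity)]
  refine le_min ?_ ?_
  · have h1 : (μ (Metric.closedBall 0 ε)).toReal ≤
        (ENNReal.ofReal c * volume (Metric.closedBall (0 : EuclideanSpace ℝ (Fin n)) ε)).toReal := by
      refine ENNReal.toReal_mono ?_ hbound
      rw [hvol]
      exact ENNReal.mul_ne_top ENNReal.ofReal_ne_top ENNReal.ofReal_ne_top
    refine h1.trans ?_
    rw [hvol, ← ENNReal.ofReal_mul hcpos.le, ENNReal.toReal_ofReal (by positivity)]
    -- now a real inequality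
    have s2 : Real.sqrt 2 ^ 2 = 2 := Real.sq_sqrt (by norm_num)
    have sπ : Real.sqrt π ^ 2 = π := Real.sq_sqrt Real.pi_pos.le
    have sP : Real.sqrt P.det ^ 2 = P.det := Real.sq_sqrt hPd.le
    have hsplit : Real.sqrt ((2 * π) ^ n * P.det)
        = Real.sqrt 2 ^ n * Real.sqrt π ^ n * Real.sqrt P.det := by
      rw [show (2 * π) ^ n * P.det
          = (Real.sqrt 2 ^ n * Real.sqrt π ^ n * Real.sqrt P.det) ^ 2 by
        calc (2 * π) ^ n * P.det
            = (Real.sqrt 2 ^ 2 * Real.sqrt π ^ 2) ^ n * Real.sqrt P.det ^ 2 := by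
              rw [s2, sπ, sP]
          _ = (Real.sqrt 2 ^ n * Real.sqrt π ^ n * Real.sqrt P.det) ^ 2 := by ring]
      exact Real.sqrt_sq (by positivity)
    have h2half : (2 : ℝ) ^ ((n : ℝ) / 2) = Real.sqrt 2 ^ n := by
      rw [show ((n : ℝ) / 2) = (1 / 2 : ℝ) * (n : ℝ) by ring,
        Real.rpow_mul (by norm_num : (0:ℝ) ≤ 2), Real.rpow_natCast, ← Real.sqrt_eq_rpow]
    have hsS : 1 ≤ Real.sqrt ((R⁻¹ + W⁻¹).det) * Real.sqrt P.det := by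
      have h1' : Real.sqrt (1 / (R⁻¹ + W⁻¹).det) ≤ Real.sqrt P.det := Real.sqrt_le_sqrt part1
      rw [one_div, Real.sqrt_inv] at h1'
      have hb : 0 < Real.sqrt ((R⁻¹ + W⁻¹).det) := Real.sqrt_pos.mpr hdS
      calc (1:ℝ) = Real.sqrt ((R⁻¹ + W⁻¹).det) * (Real.sqrt ((R⁻¹ + W⁻¹).det))⁻¹ :=
            (mul_inv_cancel₀ hb.ne').symm
        _ ≤ Real.sqrt ((R⁻¹ + W⁻¹).det) * Real.sqrt P.det :=
            mul_le_mul_of_nonneg_left h1' hb.le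
    rw [hcdef, hsplit, h2half]
    have ha : (0:ℝ) < Real.sqrt 2 ^ n := by positivity
    have hp : (0:ℝ) < Real.sqrt π ^ n := by positivity
    have hq : (0:ℝ) < Real.sqrt P.det := Real.sqrt_pos.mpr hPd
    have hE : (0:ℝ) < ε ^ n := pow_pos hε n
    have key : (Real.sqrt 2 ^ n * Real.sqrt π ^ n * Real.sqrt P.det)⁻¹ *
        (ε ^ n * (Real.sqrt π ^ n / Real.Gamma ((n : ℝ) / 2 + 1)))
        = ε ^ n / (Real.sqrt 2 ^ n * Real.sqrt P.det * Real.Gamma ((n : ℝ) / 2 + 1)) := by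
      field_simp
    rw [key, div_le_div_iff₀ (by positivity) (by positivity)]
    calc ε ^ n * (Real.sqrt 2 ^ n * Real.Gamma ((n : ℝ) / 2 + 1))
        = (ε ^ n * Real.sqrt 2 ^ n * Real.Gamma ((n : ℝ) / 2 + 1)) * 1 := by ring
      _ ≤ (ε ^ n * Real.sqrt 2 ^ n * Real.Gamma ((n : ℝ) / 2 + 1)) *
            (Real.sqrt ((R⁻¹ + W⁻¹).det) * Real.sqrt P.det) :=
          mul_le_mul_of_nonneg_left hsS (by positivity)
      _ = ε ^ n * Real.sqrt ((R⁻¹ + W⁻¹).det) *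
            (Real.sqrt 2 ^ n * Real.sqrt P.det * Real.Gamma ((n : ℝ) / 2 + 1)) := by ring
  · exact hto1
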